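/- Let f : ℝⁿ → ℝⁿ be piecewise affine with pieces (f_i, C_i), i = 1,…,N, and suppose each affine map f_i is invertible (its linear part is a bijection of ℝⁿ). Then f is a proper map: the preimage under f of every compact subset of ℝⁿ is compact. -/
import Mathlib


/-- `Eu n` is the Euclidean space `ℝⁿ`. -/
noncomputable abbrev Eu (n : ℕ) := EuclideanSpace ℝ (Fin n)

/-- A closed convex polyhedron in `ℝⁿ`: a finite intersection of closed half-spaces. -/
def IsPolyhedron {n : ℕ} (C : Set (Eu n)) : Prop :=
  ∃ (m : ℕ) (l : Fin m → (Eu n →ₗ[ℝ] ℝ)) (c : Fin m → ℝ),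
    C = {x | ∀ i, l i x ≤ c i}

/-- `f : ℝⁿ → ℝⁿ` is piecewise affine with pieces `(F i, C i)`, `i : Fin N`:
each `F i` is an affine map, each `C i` is a closed convex polyhedron with nonempty
interior, the `C i` cover `ℝⁿ`, their interiors are pairwise disjoint, and `f`
agrees with `F i` on `C i`. -/
def IsPiecewiseAffine {n N : ℕ} (f : Eu n → Eu n)
    (F : Fin N → (Eu n →ᵃ[ℝ] Eu n)) (C : Fin N → Set (Eu n)) : Prop :=
  (∀ i, IsPolyhedron (C i)) ∧
  (∀ i, (interior (C i)).Nonempty) ∧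
  (⋃ i, C i) = Set.univ ∧
  (∀ i j, i ≠ j → interior (C i) ∩ interior (C j) = ∅) ∧
  (∀ i, ∀ x ∈ C i, f x = F i x)

/-- If every piece of a piecewise affine map `f : ℝⁿ → ℝⁿ` is an
invertible affine map (its linear part is bijective), then `f` is proper. -/
theorem piecewise_affine_invertible_pieces_proper
    {n N : ℕ} (f : Eu n → Eu n) (F : Fin N → (Eu n →ᵃ[ℝ] Eu n))
    (C : Fin N → Set (Eu n)) (hpa : IsPiecewiseAffine f F C)
    (hinv : ∀ i, Function.Bijective (F i).linear) :
    ∀ K : Set (Eu n), IsCompact K → IsCompact (f ⁻¹' K) := by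
  obtain ⟨hpoly, -, hcover, -, hagree⟩ := hpa
  intro K hK
  -- each piece is closed
  have hclosedC : ∀ i, IsClosed (C i) := by
    intro i
    obtain ⟨m, l, c, hC⟩ := hpoly i
    have : C i = ⋂ j, {x | l j x ≤ c j} := by
      rw [hC]; ext x; simp [Set.mem_iInter]
    rw [this]
    exact isClosed_iInter fun j =>
      isClosed_le (l j).continuous_of_finiteDimensional continuous_const
  -- preimage of K under each affine piece is compact
  have hpre : ∀ i, IsCompact ((F i) ⁻¹' K) := by
    intro i
    have hb : Function.Bijective (F i) := (F i).linear_bijective_iff.mp (hinv i)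
    set e := AffineEquiv.ofBijective hb with he
    have hfun : (F i : Eu n → Eu n) = e := rfl
    have : (F i) ⁻¹' K = e.symm '' K := by
      rw [hfun]
      ext y
      constructor
      · intro h
        exact ⟨e y, h, e.symm_apply_apply y⟩
      · rintro ⟨k, hk, rfl⟩
        simpa [e.apply_symm_apply] using hk
    rw [this]
    exact hK.image e.symm.toAffineMap.continuous_of_finiteDimensional
  -- the preimage is a finite union of compact sets
  have key : f ⁻¹' K = ⋃ i, C i ∩ (F i) ⁻¹' K := by
    ext x
    constructor
    · intro hx
      have : x ∈ ⋃ i, C i := by rw [hcover]; trivial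
      obtain ⟨_, ⟨i, rfl⟩, hxi⟩ := this
      exact Set.mem_iUnion.mpr ⟨i, hxi, by
        show F i x ∈ K
        rw [← hagree i x hxi]; exact hx⟩
    · intro hx
      obtain ⟨_, ⟨i, rfl⟩, hxi, hFx⟩ := hx
      show f x ∈ K
      rw [hagree i x hxi]; exact hFx
  rw [key]
  exact isCompact_iUnion fun i => ((hpre i).inter_left (hclosedC i))
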